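/- arXiv:1410.0342 — 5 statements merged into one kernel-verified Lean document; each statement's English description precedes it below -/
import Mathlib

section
/- For any matrix Z ∈ ℝ^{m×n} of rank at most k, the nuclear norm equals the infimum of (1/2)(‖X‖_F² + ‖Y‖_F²) over all factorizations Z = XY with X ∈ ℝ^{m×k}, Y ∈ ℝ^{k×n}, and this infimum is attained. -/
open Matrix BigOperators

/-- Frobenius norm squared of a real matrix. -/
noncomputable def frobSq {m n : ℕ} (X : Matrix (Fin m) (Fin n) ℝ) : ℝ :=
  ∑ i, ∑ j, (X i j) ^ 2

/-- Nuclear norm: sum of singular values, i.e. sum of square roots of the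
eigenvalues of `Zᴴ * Z`. -/
noncomputable def nuclearNorm {m n : ℕ} (Z : Matrix (Fin m) (Fin n) ℝ) : ℝ :=
  ∑ j, Real.sqrt ((Matrix.isHermitian_conjTranspose_mul_self Z).eigenvalues j)

namespace NuclearAux

open Finset

lemma ite_sum_mul {ι : Type*} [Fintype ι] {k : ℕ}
    (e : ι ↪ Fin k) (a b : ι → ℝ) :
    ∑ l : Fin k, (∑ j, if e j = l then a j else 0) * (∑ j, if e j = l then b j else 0)
      = ∑ j, a j * b j := by
  classical
  have h1 : ∀ l : Fin k, (∑ j, if e j = l then a j else 0) * (∑ j, if e j = l then b j else 0)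
      = ∑ j, if e j = l then a j * b j else 0 := by
    intro l
    by_cases h : ∃ j, e j = l
    · obtain ⟨j0, hj0⟩ := h
      have key : ∀ (c : ι → ℝ), (∑ j, if e j = l then c j else 0) = c j0 := by
        intro c
        rw [Finset.sum_eq_single j0]
        · simp [hj0]
        · intro j _ hj
          have : e j ≠ l := fun hh => hj (e.injective (hh.trans hj0.symm))
          simp [this]
        · simp
      rw [key, key, key]
    · push_neg at h
      simp [h]
  simp_rw [h1]
  rw [Finset.sum_comm]
  simp

lemma bessel_coords {ι : Type*} [Fintype ι] {d : ℕ}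
    {u : ι → EuclideanSpace ℝ (Fin d)} (hu : Orthonormal ℝ u) (x : Fin d → ℝ) :
    ∑ j, (∑ i, u j i * x i) ^ 2 ≤ ∑ i, x i ^ 2 := by
  have h := hu.sum_inner_products_le (s := Finset.univ) ((WithLp.equiv 2 _).symm x)
  simp only [PiLp.inner_apply, RCLike.inner_apply, starRingEnd_apply, star_trivial,
    Real.norm_eq_abs, sq_abs] at h
  calc ∑ j, (∑ i, u j i * x i) ^ 2 ≤ ‖(WithLp.equiv 2 (Fin d → ℝ)).symm x‖ ^ 2 := by
        refine le_of_eq_of_le (Finset.sum_congr rfl fun j _ => ?_) h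
        congr 1; exact Finset.sum_congr rfl fun i _ => mul_comm _ _
    _ = ∑ i, x i ^ 2 := by
        rw [EuclideanSpace.norm_eq, Real.sq_sqrt (by positivity)]
        simp [sq_abs]

lemma basis_complete {d : ℕ} (b : OrthonormalBasis (Fin d) ℝ (EuclideanSpace ℝ (Fin d)))
    (t t' : Fin d) : ∑ j, b j t * b j t' = if t = t' then (1:ℝ) else 0 := by
  have h := b.sum_repr (EuclideanSpace.single t (1:ℝ))
  have h2 := congrFun (congrArg (fun z : EuclideanSpace ℝ (Fin d) => (z : Fin d → ℝ)) h) t'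
  simp only [OrthonormalBasis.repr_apply_apply, EuclideanSpace.inner_single_right,
    starRingEnd_apply, star_trivial, mul_one, one_mul,
    EuclideanSpace.single_apply] at h2
  have h4 : (∑ x : Fin d, b x t • b x) t' = ∑ x : Fin d, b x t * b x t' :=
    by rw [WithLp.ofLp_sum]; exact Finset.sum_apply t' Finset.univ _
  rw [h4] at h2
  rw [h2]; simp [eq_comm]

variable {m n : ℕ} (Z : Matrix (Fin m) (Fin n) ℝ)

lemma dot_v (i j : Fin n) :
    ⇑((Matrix.isHermitian_conjTranspose_mul_self Z).eigenvectorBasis i) ⬝ᵥ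
      ⇑((Matrix.isHermitian_conjTranspose_mul_self Z).eigenvectorBasis j)
      = if i = j then (1:ℝ) else 0 := by
  have h := orthonormal_iff_ite.mp
    (Matrix.isHermitian_conjTranspose_mul_self Z).eigenvectorBasis.orthonormal i j
  simpa [PiLp.inner_apply, RCLike.inner_apply, starRingEnd_apply, star_trivial,
    dotProduct, mul_comm] using h

lemma conj_transpose_real : Zᴴ = Zᵀ := by
  ext i j; simp [Matrix.conjTranspose_apply]

lemma eig_mulVec (j : Fin n) :
    Zᵀ *ᵥ (Z *ᵥ ⇑((Matrix.isHermitian_conjTranspose_mul_self Z).eigenvectorBasis j))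
      = (Matrix.isHermitian_conjTranspose_mul_self Z).eigenvalues j •
        ⇑((Matrix.isHermitian_conjTranspose_mul_self Z).eigenvectorBasis j) := by
  have heig := (Matrix.isHermitian_conjTranspose_mul_self Z).mulVec_eigenvectorBasis j
  have key : ∀ b : Fin n → ℝ, (Zᴴ * Z) *ᵥ b = Zᵀ *ᵥ (Z *ᵥ b) := by
    intro b
    rw [conj_transpose_real, ← Matrix.mulVec_mulVec]
  rw [key] at heig
  exact heig

lemma dot_w (i j : Fin n) :
    (Z *ᵥ ⇑((Matrix.isHermitian_conjTranspose_mul_self Z).eigenvectorBasis i)) ⬝ᵥ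
      (Z *ᵥ ⇑((Matrix.isHermitian_conjTranspose_mul_self Z).eigenvectorBasis j))
      = if i = j then (Matrix.isHermitian_conjTranspose_mul_self Z).eigenvalues j else 0 := by
  have h1 : ∀ a b : Fin n → ℝ, (Z *ᵥ a) ⬝ᵥ (Z *ᵥ b) = a ⬝ᵥ (Zᵀ *ᵥ (Z *ᵥ b)) := by
    intro a b
    rw [Matrix.dotProduct_mulVec a Zᵀ, Matrix.vecMul_transpose]
  rw [h1, eig_mulVec, dotProduct_smul, dot_v]
  simp [mul_ite]

lemma dot_le {k : ℕ} (a b : Fin k → ℝ) : a ⬝ᵥ b ≤ (a ⬝ᵥ a + b ⬝ᵥ b) / 2 := by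
  simp only [dotProduct]
  have h : ∀ i : Fin k, a i * b i ≤ (a i * a i + b i * b i) / 2 := by
    intro i; nlinarith [sq_nonneg (a i - b i)]
  calc ∑ i, a i * b i ≤ ∑ i, (a i * a i + b i * b i) / 2 :=
        Finset.sum_le_sum fun i _ => h i
    _ = (∑ i, a i * a i + ∑ i, b i * b i) / 2 := by
        rw [← Finset.sum_add_distrib, Finset.sum_div]

end NuclearAux

open NuclearAux Finset in
/-- For a matrix of rank at most `k`, the nuclear norm is the least value of
`(1/2)(‖X‖_F² + ‖Y‖_F²)` over factorizations `Z = XY` with inner dimension `k`,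
and this least value is attained. -/
theorem nuclearNorm_isLeast_factorization {m n k : ℕ}
    (Z : Matrix (Fin m) (Fin n) ℝ) (hZ : Z.rank ≤ k) :
    IsLeast {c : ℝ | ∃ (X : Matrix (Fin m) (Fin k) ℝ) (Y : Matrix (Fin k) (Fin n) ℝ),
      X * Y = Z ∧ c = (1 / 2) * (frobSq X + frobSq Y)} (nuclearNorm Z) := by
  classical
  set hA := Matrix.isHermitian_conjTranspose_mul_self Z with hAdef
  let μ : Fin n → ℝ := hA.eigenvalues
  let v : Fin n → EuclideanSpace ℝ (Fin n) := fun j => hA.eigenvectorBasis j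
  let w : Fin n → Fin m → ℝ := fun j => Z *ᵥ ⇑(hA.eigenvectorBasis j)
  have hμ : ∀ j, 0 ≤ μ j := fun j => Matrix.eigenvalues_conjTranspose_mul_self_nonneg Z j
  have hdw : ∀ i j, w i ⬝ᵥ w j = if i = j then μ j else 0 := fun i j => dot_w Z i j
  have hdv : ∀ i j, ⇑(v i) ⬝ᵥ ⇑(v j) = if i = j then (1:ℝ) else 0 := fun i j => dot_v Z i j
  -- the subtype of indices with non-zero eigenvalue
  let ι := {j : Fin n // μ j ≠ 0}
  -- w j vanishes when μ j = 0
  have hw0 : ∀ j, μ j = 0 → w j = 0 := by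
    intro j hj
    have h := hdw j j
    rw [if_pos rfl, hj] at h
    funext i
    have hsum : ∑ i, w j i * w j i = 0 := h
    have := (Finset.sum_eq_zero_iff_of_nonneg
      (fun i _ => mul_self_nonneg (w j i))).mp hsum i (Finset.mem_univ i)
    exact (mul_self_eq_zero).mp this
  -- restricting sums to ι
  have hsubsum : ∀ (f : Fin n → ℝ), (∀ j, μ j = 0 → f j = 0) →
      ∑ j, f j = ∑ j : ι, f j := by
    intro f hf
    rw [← Finset.sum_filter_of_ne (p := fun j => μ j ≠ 0)
      (fun x _ hx h0 => hx (hf x h0))]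
    exact Finset.sum_subtype _ (by simp) f
  -- nuclear norm as a sum over ι
  have hnn : nuclearNorm Z = ∑ j : ι, Real.sqrt (μ j) := by
    have h' : ∑ j, Real.sqrt (μ j) = ∑ j : ι, Real.sqrt (μ j.1) :=
      hsubsum (fun j => Real.sqrt (μ j)) (fun j hj => by show Real.sqrt (μ j) = 0; rw [hj, Real.sqrt_zero])
    rw [nuclearNorm]
    exact h'
  constructor
  · -- membership: construct the optimal factorization
    have hcard : Fintype.card ι ≤ k := by
      have h1 : (Zᴴ * Z).rank = Fintype.card ι := hA.rank_eq_card_non_zero_eigs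
      have h2 : (Zᴴ * Z).rank = Z.rank := by
        rw [conj_transpose_real Z]; exact Matrix.rank_transpose_mul_self Z
      omega
    obtain ⟨e⟩ : Nonempty (ι ↪ Fin k) :=
      Function.Embedding.nonempty_of_card_le (by simpa using hcard)
    -- fourth root of eigenvalue
    let s : ι → ℝ := fun j => Real.sqrt (Real.sqrt (μ j))
    have hs_pos : ∀ j : ι, 0 < s j := by
      intro j
      apply Real.sqrt_pos.mpr
      apply Real.sqrt_pos.mpr
      exact lt_of_le_of_ne (hμ j) (Ne.symm j.2)
    have hs_sq : ∀ j : ι, s j ^ 2 = Real.sqrt (μ j) := fun j =>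
      Real.sq_sqrt (Real.sqrt_nonneg _)
    refine ⟨Matrix.of fun i l => ∑ j : ι, if e j = l then w j i / s j else 0,
      Matrix.of fun l t => ∑ j : ι, if e j = l then s j * ⇑(v j.1) t else 0, ?_, ?_⟩
    · -- X * Y = Z
      ext i t
      rw [Matrix.mul_apply]
      simp only [Matrix.of_apply]
      rw [ite_sum_mul e (fun j => w j i / s j) (fun j => s j * ⇑(v j.1) t)]
      have hterm : ∀ j : ι, w j i / s j * (s j * ⇑(v j.1) t) = w j i * ⇑(v j.1) t := by
        intro j
        have hne := (hs_pos j).ne'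
        field_simp
      rw [Finset.sum_congr rfl (fun j _ => hterm j)]
      rw [← hsubsum (fun j => w j i * ⇑(v j) t)
        (fun j hj => show w j i * ⇑(v j) t = 0 by rw [hw0 j hj]; simp)]
      -- now show ∑ j : Fin n, w j i * v j t = Z i t
      have expand : ∀ j : Fin n, w j i = ∑ t', Z i t' * ⇑(v j) t' := by
        intro j
        simp [w, v, Matrix.mulVec, dotProduct]
      calc ∑ j, w j i * ⇑(v j) t
          = ∑ j, ∑ t', Z i t' * (⇑(v j) t' * ⇑(v j) t) := by
            simp_rw [expand, Finset.sum_mul, mul_assoc]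
        _ = ∑ t', Z i t' * ∑ j, ⇑(v j) t' * ⇑(v j) t := by
            rw [Finset.sum_comm]
            simp_rw [Finset.mul_sum]
        _ = Z i t := by
            have hb : ∀ t' : Fin n, ∑ j, ⇑(v j) t' * ⇑(v j) t = if t' = t then (1:ℝ) else 0 :=
              fun t' => basis_complete hA.eigenvectorBasis t' t
            simp_rw [hb]
            simp
    · -- value equals nuclear norm
      have hwj : ∀ j : ι, ∑ i, (w j.1 i) ^ 2 = μ j.1 := by
        intro j
        have h := hdw j.1 j.1
        rw [if_pos rfl] at h
        simpa [dotProduct, pow_two] using h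
      have hfX : frobSq (Matrix.of fun i l => ∑ j : ι, if e j = l then w j i / s j else 0)
          = ∑ j : ι, Real.sqrt (μ j.1) := by
        rw [frobSq]
        have h1 : ∀ i, ∑ l, ((Matrix.of fun i l => ∑ j : ι, if e j = l then w j i / s j else 0) i l) ^ 2
            = ∑ j : ι, (w j.1 i / s j) ^ 2 := by
          intro i
          simp only [Matrix.of_apply, pow_two]
          exact ite_sum_mul e _ _
        rw [Finset.sum_congr rfl fun i _ => h1 i, Finset.sum_comm]
        refine Finset.sum_congr rfl fun j _ => ?_
        simp_rw [div_pow]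
        rw [← Finset.sum_div, hwj j, hs_sq j, Real.div_sqrt]
      have hfY : frobSq (Matrix.of fun l t => ∑ j : ι, if e j = l then s j * ⇑(v j.1) t else 0)
          = ∑ j : ι, Real.sqrt (μ j.1) := by
        rw [frobSq, Finset.sum_comm]
        have h1 : ∀ t, ∑ l, ((Matrix.of fun l t => ∑ j : ι, if e j = l then s j * ⇑(v j.1) t else 0) l t) ^ 2
            = ∑ j : ι, (s j * ⇑(v j.1) t) ^ 2 := by
          intro t
          simp only [Matrix.of_apply, pow_two]
          exact ite_sum_mul e _ _
        rw [Finset.sum_congr rfl fun t _ => h1 t, Finset.sum_comm]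
        refine Finset.sum_congr rfl fun j _ => ?_
        have hv1 : ∑ t, (⇑(v j.1) t) ^ 2 = 1 := by
          have h := hdv j.1 j.1
          rw [if_pos rfl] at h
          simpa [dotProduct, pow_two] using h
        simp_rw [mul_pow]
        rw [← Finset.mul_sum, hv1, mul_one, hs_sq j]
      rw [hnn, hfX, hfY]
      ring
  · -- lower bound
    rintro c ⟨X, Y, hXY, rfl⟩
    -- left singular vectors
    let u : ι → EuclideanSpace ℝ (Fin m) :=
      fun j => (Real.sqrt (μ j.1))⁻¹ • (WithLp.equiv 2 (Fin m → ℝ)).symm (w j.1)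
    have hsqrt_ne : ∀ j : ι, Real.sqrt (μ j.1) ≠ 0 := by
      intro j
      exact Real.sqrt_ne_zero'.mpr (lt_of_le_of_ne (hμ j.1) (Ne.symm j.2))
    have hu : Orthonormal ℝ u := by
      rw [orthonormal_iff_ite]
      intro i j
      have : (inner ℝ (u i) (u j) : ℝ)
          = (Real.sqrt (μ i.1))⁻¹ * (Real.sqrt (μ j.1))⁻¹ * (w i.1 ⬝ᵥ w j.1) := by
        simp only [u, PiLp.inner_apply, RCLike.inner_apply, starRingEnd_apply, star_trivial,
          PiLp.smul_apply, smul_eq_mul, dotProduct, Finset.mul_sum]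
        refine Finset.sum_congr rfl fun t _ => ?_
        show (Real.sqrt (μ j.1))⁻¹ * w j.1 t * ((Real.sqrt (μ i.1))⁻¹ * w i.1 t) = _
        ring
      rw [this, hdw]
      by_cases hij : (i : Fin n) = j
      · have hij' : i = j := Subtype.ext hij
        subst hij'
        rw [if_pos rfl, if_pos rfl]
        rw [← Real.mul_self_sqrt (hμ i.1)]
        field_simp
        rw [Real.sqrt_sq (Real.sqrt_nonneg _)]
        exact div_self (pow_ne_zero 2 (hsqrt_ne i))
      · rw [if_neg hij, if_neg (fun h => hij (congrArg Subtype.val h))]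
        simp
    -- p and q
    let p : ι → Fin k → ℝ := fun j => ⇑(u j) ᵥ* X
    let q : ι → Fin k → ℝ := fun j => Y *ᵥ ⇑(v j.1)
    have key : ∀ j : ι, Real.sqrt (μ j.1) ≤ (p j ⬝ᵥ p j + q j ⬝ᵥ q j) / 2 := by
      intro j
      have h1 : Real.sqrt (μ j.1) = p j ⬝ᵥ q j := by
        show _ = (⇑(u j) ᵥ* X) ⬝ᵥ (Y *ᵥ ⇑(v j.1))
        rw [← Matrix.dotProduct_mulVec, Matrix.mulVec_mulVec, hXY]
        have h2 : ⇑(u j) ⬝ᵥ w j.1 = (Real.sqrt (μ j.1))⁻¹ * (w j.1 ⬝ᵥ w j.1) := by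
          simp only [u, dotProduct, Finset.mul_sum]
          refine Finset.sum_congr rfl fun t _ => ?_
          show (Real.sqrt (μ j.1))⁻¹ * w j.1 t * w j.1 t = _
          ring
        show _ = ⇑(u j) ⬝ᵥ w j.1
        rw [h2, hdw, if_pos rfl]
        rw [← Real.mul_self_sqrt (hμ j.1)]
        rw [Real.sqrt_mul_self (Real.sqrt_nonneg _), ← mul_assoc, inv_mul_cancel₀ (hsqrt_ne j), one_mul]
      rw [h1]
      exact dot_le _ _
    have hP : ∑ j : ι, p j ⬝ᵥ p j ≤ frobSq X := by
      have h1 : ∀ j : ι, p j ⬝ᵥ p j = ∑ l, (∑ i, u j i * X i l) ^ 2 := by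
        intro j
        simp [p, dotProduct, Matrix.vecMul, pow_two]
      rw [Finset.sum_congr rfl fun j _ => h1 j]
      calc ∑ j : ι, ∑ l, (∑ i, u j i * X i l) ^ 2
          = ∑ l, ∑ j : ι, (∑ i, u j i * X i l) ^ 2 := Finset.sum_comm
        _ ≤ ∑ l, ∑ i, X i l ^ 2 :=
            Finset.sum_le_sum fun l _ => bessel_coords hu fun i => X i l
        _ = frobSq X := by rw [frobSq]; exact Finset.sum_comm
    have hQ : ∑ j : ι, q j ⬝ᵥ q j ≤ frobSq Y := by
      have hv' : Orthonormal ℝ (fun j : ι => v j.1) :=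
        hA.eigenvectorBasis.orthonormal.comp Subtype.val Subtype.val_injective
      have h1 : ∀ j : ι, q j ⬝ᵥ q j = ∑ l, (∑ t, ⇑(v j.1) t * Y l t) ^ 2 := by
        intro j
        simp only [q, dotProduct, Matrix.mulVec, pow_two]
        refine Finset.sum_congr rfl fun l _ => ?_
        congr 1 <;> exact Finset.sum_congr rfl fun t _ => mul_comm _ _
      rw [Finset.sum_congr rfl fun j _ => h1 j]
      calc ∑ j : ι, ∑ l, (∑ t, ⇑(v j.1) t * Y l t) ^ 2
          = ∑ l, ∑ j : ι, (∑ t, ⇑(v j.1) t * Y l t) ^ 2 := Finset.sum_comm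
        _ ≤ ∑ l, ∑ t, Y l t ^ 2 :=
            Finset.sum_le_sum fun l _ => bessel_coords hv' fun t => Y l t
        _ = frobSq Y := rfl
    rw [hnn]
    calc ∑ j : ι, Real.sqrt (μ j.1)
        ≤ ∑ j : ι, (p j ⬝ᵥ p j + q j ⬝ᵥ q j) / 2 := Finset.sum_le_sum fun j _ => key j
      _ = ((∑ j : ι, p j ⬝ᵥ p j) + ∑ j : ι, q j ⬝ᵥ q j) / 2 := by
          rw [← Finset.sum_add_distrib, Finset.sum_div]
      _ ≤ (frobSq X + frobSq Y) / 2 := by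
          have := add_le_add hP hQ
          linarith
      _ = 1 / 2 * (frobSq X + frobSq Y) := by ring
end

section
/- The Huber function is the infimal convolution of the absolute value and half the square: for all x ∈ ℝ, huber(x) = inf{|s| + (1/2)n² : x = n + s, n,s ∈ ℝ}. -/
/-- The Huber function. -/
noncomputable def huber (x : ℝ) : ℝ := if |x| ≤ 1 then x ^ 2 / 2 else |x| - 1 / 2

/-- The Huber function is the infimal convolution of `|·|` and `(1/2)(·)²`. -/
theorem huber_eq_infConv (x : ℝ) :
    huber x = sInf {v : ℝ | ∃ n s : ℝ, x = n + s ∧ v = |s| + (1 / 2) * n ^ 2} := by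
  have hlb : ∀ v ∈ {v : ℝ | ∃ n s : ℝ, x = n + s ∧ v = |s| + (1 / 2) * n ^ 2},
      huber x ≤ v := by
    rintro v ⟨n, s, hx, rfl⟩
    have hs1 : s ≤ |s| := le_abs_self s
    have hs2 : -s ≤ |s| := neg_le_abs s
    unfold huber
    split_ifs with h
    · have h1 : x ≤ 1 := (abs_le.mp h).2
      have h2 : -1 ≤ x := (abs_le.mp h).1
      nlinarith [sq_nonneg s, abs_nonneg s]
    · push_neg at h
      have habs : |x| ≤ |s| + |x - s| := by
        calc |x| = |s + (x - s)| := by ring_nf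
        _ ≤ |s| + |x - s| := abs_add_le _ _
      have hn : n = x - s := by linarith
      subst hn
      nlinarith [sq_nonneg (|x - s| - 1), sq_abs (x - s)]
  have hmem : huber x ∈ {v : ℝ | ∃ n s : ℝ, x = n + s ∧ v = |s| + (1 / 2) * n ^ 2} := by
    unfold huber
    split_ifs with h
    · exact ⟨x, 0, by ring, by simp; ring⟩
    · push_neg at h
      rcases le_or_gt 0 x with hx | hx
      · have hx1 : 1 < x := by rwa [abs_of_nonneg hx] at h
        refine ⟨1, x - 1, by ring, ?_⟩
        rw [abs_of_nonneg hx, abs_of_nonneg (by linarith)]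
        ring
      · have hx1 : x < -1 := by
          rw [abs_of_neg hx] at h; linarith
        refine ⟨-1, x + 1, by ring, ?_⟩
        rw [abs_of_neg hx, abs_of_neg (by linarith)]
        ring
  exact le_antisymm (le_csInf ⟨_, hmem⟩ hlb) (csInf_le ⟨_, hlb⟩ hmem)
end

section
/- For a permutation a of {1,…,d} and u ∈ ℝ^d, define L(u,a) = ∑_{i=1}^{d−1} (1 − u_{a(i)} + u_{a(i+1)})₊. If u has distinct entries, then the permutation sorting u in decreasing order (i.e., the â with u_{â(1)} > u_{â(2)} > ⋯ > u_{â(d)}) minimizes L(u,·) over all permutations a. -/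
open BigOperators


open BigOperators Finset

private lemma exists_cross (P : ℕ → ℕ) (k : ℕ) :
    ∀ n : ℕ, P 0 ≤ k → k < P n → ∃ j, j < n ∧ P j ≤ k ∧ k < P (j + 1) := by
  intro n
  induction n with
  | zero => intro h0 hn; omega
  | succ m ih =>
    intro h0 hn
    by_cases h : k < P m
    · obtain ⟨j, h1, h2, h3⟩ := ih h0 h
      exact ⟨j, by omega, h2, h3⟩
    · exact ⟨m, by omega, by omega, hn⟩

private lemma main_aux (n : ℕ) (G : ℕ → ℝ) (P : ℕ → ℕ)
    (hG : ∀ k, k < n → G (k + 1) < G k) (hP : ∀ j, P j ≤ n) :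
    ∑ k ∈ range n, max (1 - G k + G (k + 1)) 0 ≤
      ∑ j ∈ range n, max (1 - G (P j) + G (P (j + 1))) 0 := by
  classical
  obtain ⟨gap, hgapdef⟩ : ∃ gap : ℕ → ℝ, ∀ k, gap k = G k - G (k + 1) := ⟨_, fun _ => rfl⟩
  have hgap : ∀ k, k < n → 0 < gap k := by
    intro k hk; rw [hgapdef]; have := hG k hk; linarith
  obtain ⟨w, hwdef⟩ : ∃ w : ℕ → ℝ,
      ∀ l, w l = ∑ k ∈ range n, if l ≤ k then gap k else 0 := ⟨_, fun _ => rfl⟩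
  have hwstep : ∀ l, l < n → w l = gap l + w (l + 1) := by
    intro l hl
    rw [hwdef, hwdef]
    have hcong : ∀ k ∈ range n, (if l ≤ k then gap k else 0)
        = (if k = l then gap k else 0) + (if l + 1 ≤ k then gap k else 0) := by
      intro k _
      rcases Nat.lt_trichotomy k l with h | h | h
      · rw [if_neg (by omega), if_neg (by omega), if_neg (by omega)]; ring
      · subst h; rw [if_pos le_rfl, if_pos rfl, if_neg (by omega)]; ring
      · rw [if_pos (by omega), if_neg (by omega), if_pos (by omega)]; ring
    rw [Finset.sum_congr rfl hcong, Finset.sum_add_distrib,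
      Finset.sum_ite_eq' (range n) l gap, if_pos (Finset.mem_range.mpr hl)]
  have hwG : ∀ m l, l ≤ n → n - l = m → G l = G n + w l := by
    intro m
    induction m with
    | zero =>
      intro l hl hm
      have hln : l = n := by omega
      subst hln
      have hwn : w l = 0 := by
        rw [hwdef]
        apply Finset.sum_eq_zero
        intro k hk
        rw [if_neg (fun h => absurd (Finset.mem_range.mp hk) (by omega))]
      rw [hwn]; ring
    | succ m ih =>
      intro l hl hm
      have hln : l < n := by omega
      have h1 := ih (l + 1) (by omega) (by omega)
      have h2 := hwstep l hln
      have h3 : G l = gap l + G (l + 1) := by rw [hgapdef]; ring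
      rw [h3, h1, h2]; ring
  have hwG' : ∀ l, l ≤ n → G l = G n + w l := fun l hl => hwG (n - l) l hl rfl
  obtain ⟨ind, hinddef⟩ : ∃ ind : ℕ → ℕ → ℝ,
      ∀ k l, ind k l = if l ≤ k then 1 else 0 := ⟨_, fun _ _ => rfl⟩
  have hind01 : ∀ k l, ind k l = 0 ∨ ind k l = 1 := by
    intro k l; rw [hinddef]; split_ifs <;> simp
  have hindmono : ∀ k l m, l ≤ m → ind k m ≤ ind k l := by
    intro k l m h; rw [hinddef, hinddef]
    split_ifs with h1 h2 <;> norm_num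
    omega
  have hwind : ∀ l, w l = ∑ k ∈ range n, ind k l * gap k := by
    intro l
    rw [hwdef]
    apply Finset.sum_congr rfl
    intro k _
    rw [hinddef]; split_ifs <;> ring
  obtain ⟨J, hJ⟩ : ∃ J : ℕ → ℕ, ∀ k, P 0 ≤ k → k < P n →
      J k < n ∧ P (J k) ≤ k ∧ k < P (J k + 1) := by
    refine ⟨fun k => if h : P 0 ≤ k ∧ k < P n then
      (exists_cross P k n h.1 h.2).choose else 0, ?_⟩
    intro k h0 h1
    simp only [dif_pos (And.intro h0 h1)]
    exact (exists_cross P k n h0 h1).choose_spec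
  obtain ⟨Zp, hZpdef⟩ : ∃ Zp : ℕ → Prop,
      ∀ j, Zp j ↔ ∃ k, k < n ∧ 1 < gap k ∧ P 0 ≤ k ∧ k < P n ∧ J k = j :=
    ⟨_, fun _ => Iff.rfl⟩
  obtain ⟨θ, hθdef⟩ : ∃ θ : ℕ → ℝ, ∀ j, θ j = if Zp j then 0 else 1 := ⟨_, fun _ => rfl⟩
  have hθ01 : ∀ j, θ j = 0 ∨ θ j = 1 := by
    intro j; rw [hθdef]; split_ifs <;> simp
  have hθZ : ∀ j, Zp j → θ j = 0 := by
    intro j hj; rw [hθdef, if_pos hj]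
  have hθdesc : ∀ j, θ j = 0 → P j < P (j + 1) := by
    intro j hj
    have hz : Zp j := by
      by_contra h; rw [hθdef, if_neg h] at hj; norm_num at hj
    obtain ⟨k, hk, hg, h0, h1, hJk⟩ := (hZpdef j).mp hz
    obtain ⟨_, hl, hr⟩ := hJ k h0 h1
    rw [hJk] at hl hr
    omega
  obtain ⟨φ, hφdef⟩ : ∃ φ : ℕ → ℝ, ∀ k, φ k = if gap k ≤ 1 then 1 else 0 := ⟨_, fun _ => rfl⟩
  obtain ⟨Sg, hSgdef⟩ : ∃ Sg : ℕ → ℝ,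
      ∀ k, Sg k = ∑ j ∈ range n, θ j * (ind k (P j) - ind k (P (j + 1))) := ⟨_, fun _ => rfl⟩
  -- nonnegativity of correction terms
  have htermnn : ∀ k j, 0 ≤ (1 - θ j) * (ind k (P j) - ind k (P (j + 1))) := by
    intro k j
    rcases hθ01 j with h | h
    · rw [h]
      have h1 := hθdesc j h
      have h2 : ind k (P (j + 1)) ≤ ind k (P j) := hindmono k _ _ (le_of_lt h1)
      nlinarith
    · rw [h]; ring_nf; exact le_refl 0
  have htele : ∀ k, ∑ j ∈ range n, (ind k (P j) - ind k (P (j + 1)))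
      = ind k (P 0) - ind k (P n) := fun k => Finset.sum_range_sub' (fun j => ind k (P j)) n
  have hSg2 : ∀ k, Sg k = (ind k (P 0) - ind k (P n))
      - ∑ j ∈ range n, (1 - θ j) * (ind k (P j) - ind k (P (j + 1))) := by
    intro k
    rw [hSgdef]
    have hc : ∀ j ∈ range n, θ j * (ind k (P j) - ind k (P (j + 1)))
        = (ind k (P j) - ind k (P (j + 1)))
          - (1 - θ j) * (ind k (P j) - ind k (P (j + 1))) := by
      intro j _; ring
    rw [Finset.sum_congr rfl hc, Finset.sum_sub_distrib, htele k]
  -- T3 : Sg k ≤ φ k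
  have hSgφ : ∀ k, k < n → Sg k ≤ φ k := by
    intro k hk
    have hnn : 0 ≤ ∑ j ∈ range n, (1 - θ j) * (ind k (P j) - ind k (P (j + 1))) :=
      Finset.sum_nonneg fun j _ => htermnn k j
    have hi0 := hind01 k (P 0)
    have hin := hind01 k (P n)
    by_cases hg : gap k ≤ 1
    · rw [hSg2 k, hφdef, if_pos hg]
      rcases hi0 with h | h <;> rcases hin with h' | h' <;> rw [h, h'] <;> linarith
    · rw [hSg2 k, hφdef, if_neg hg]
      by_cases hb : P 0 ≤ k ∧ k < P n
      · obtain ⟨hJlt, hJ1, hJ2⟩ := hJ k hb.1 hb.2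
        have hθJ : θ (J k) = 0 :=
          hθZ _ ((hZpdef (J k)).mpr ⟨k, hk, not_le.mp hg, hb.1, hb.2, rfl⟩)
        have hterm : (1 : ℝ) ≤ (1 - θ (J k)) * (ind k (P (J k)) - ind k (P (J k + 1))) := by
          rw [hθJ, hinddef, hinddef, if_pos hJ1, if_neg (by omega)]
          norm_num
        have hsum1 : (1 : ℝ) ≤ ∑ j ∈ range n, (1 - θ j) * (ind k (P j) - ind k (P (j + 1))) :=
          le_trans hterm
            (Finset.single_le_sum (fun j _ => htermnn k j) (Finset.mem_range.mpr hJlt))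
        rcases hi0 with h | h <;> rcases hin with h' | h' <;> rw [h, h'] <;> linarith
      · have hnet : ind k (P 0) - ind k (P n) ≤ 0 := by
          rcases not_and_or.mp hb with h | h
          · have e0 : ind k (P 0) = 0 := by rw [hinddef, if_neg h]
            rcases hin with h' | h' <;> rw [e0, h'] <;> norm_num
          · have en : ind k (P n) = 1 := by rw [hinddef, if_pos (by omega)]
            rcases hi0 with h' | h' <;> rw [en, h'] <;> norm_num
        linarith
  -- T4 : ∑ φ ≤ ∑ θ
  have hcard : ∑ k ∈ range n, φ k ≤ ∑ j ∈ range n, θ j := by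
    have h1 : ∑ k ∈ range n, φ k
        = (((range n).filter (fun k => gap k ≤ 1)).card : ℝ) := by
      rw [Finset.sum_congr rfl (fun k _ => hφdef k)]
      rw [Finset.sum_boole]
    have h2 : ∑ j ∈ range n, θ j
        = (((range n).filter (fun j => ¬ Zp j)).card : ℝ) := by
      have hc : ∀ j ∈ range n, θ j = if ¬ Zp j then (1:ℝ) else 0 := by
        intro j _; rw [hθdef]; split_ifs <;> rfl
      rw [Finset.sum_congr rfl hc, Finset.sum_boole]
    have hZB : (range n).filter Zp ⊆ Finset.image J
        ((range n).filter (fun k => 1 < gap k ∧ P 0 ≤ k ∧ k < P n)) := by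
      intro j hj
      rw [Finset.mem_filter] at hj
      obtain ⟨k, hk, hg, h0, h1', hJk⟩ := (hZpdef j).mp hj.2
      exact Finset.mem_image.mpr
        ⟨k, Finset.mem_filter.mpr ⟨Finset.mem_range.mpr hk, hg, h0, h1'⟩, hJk⟩
    have hZcard : ((range n).filter Zp).card
        ≤ ((range n).filter (fun k => 1 < gap k ∧ P 0 ≤ k ∧ k < P n)).card :=
      le_trans (Finset.card_le_card hZB) Finset.card_image_le
    have hdisj : Disjoint ((range n).filter (fun k => gap k ≤ 1))
        ((range n).filter (fun k => 1 < gap k ∧ P 0 ≤ k ∧ k < P n)) := by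
      rw [Finset.disjoint_left]
      intro x hx hx'
      rw [Finset.mem_filter] at hx hx'
      exact absurd hx.2 (not_le.mpr hx'.2.1)
    have hSB : ((range n).filter (fun k => gap k ≤ 1)).card
        + ((range n).filter (fun k => 1 < gap k ∧ P 0 ≤ k ∧ k < P n)).card ≤ n := by
      rw [← Finset.card_union_of_disjoint hdisj]
      calc _ ≤ (range n).card :=
            Finset.card_le_card (Finset.union_subset (Finset.filter_subset _ _)
              (Finset.filter_subset _ _))
        _ = n := Finset.card_range n
    have hfc : ((range n).filter Zp).card
        + ((range n).filter (fun j => ¬ Zp j)).card = n := by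
      rw [Finset.card_filter_add_card_filter_not, Finset.card_range]
    rw [h1, h2]
    have : ((range n).filter (fun k => gap k ≤ 1)).card
        ≤ ((range n).filter (fun j => ¬ Zp j)).card := by omega
    exact_mod_cast this
  -- T2 : algebraic identity
  have hT2 : ∑ j ∈ range n, θ j * (1 - (G (P j) - G (P (j + 1))))
      = ∑ j ∈ range n, θ j - ∑ k ∈ range n, gap k * Sg k := by
    have step1 : ∀ j ∈ range n, θ j * (1 - (G (P j) - G (P (j + 1))))
        = θ j - ∑ k ∈ range n, θ j * (ind k (P j) - ind k (P (j + 1))) * gap k := by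
      intro j _
      have e1 : G (P j) - G (P (j + 1)) = w (P j) - w (P (j + 1)) := by
        rw [hwG' (P j) (hP j), hwG' (P (j + 1)) (hP (j + 1))]; ring
      have eAB : w (P j) - w (P (j + 1))
          = ∑ k ∈ range n, (ind k (P j) - ind k (P (j + 1))) * gap k := by
        rw [hwind, hwind, ← Finset.sum_sub_distrib]
        exact Finset.sum_congr rfl fun k _ => by ring
      calc θ j * (1 - (G (P j) - G (P (j + 1))))
          = θ j - θ j * (w (P j) - w (P (j + 1))) := by rw [e1]; ring
        _ = θ j - θ j * ∑ k ∈ range n, (ind k (P j) - ind k (P (j + 1))) * gap k := by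
            rw [eAB]
        _ = θ j - ∑ k ∈ range n, θ j * (ind k (P j) - ind k (P (j + 1))) * gap k := by
            rw [Finset.mul_sum]
            congr 1
            exact Finset.sum_congr rfl fun k _ => (mul_assoc _ _ _).symm
    rw [Finset.sum_congr rfl step1, Finset.sum_sub_distrib]
    congr 1
    rw [Finset.sum_comm]
    refine Finset.sum_congr rfl fun k _ => ?_
    rw [hSgdef, Finset.mul_sum]
    exact Finset.sum_congr rfl fun j _ => by ring
  -- T1 : hinge bound
  have hT1 : ∑ j ∈ range n, θ j * (1 - (G (P j) - G (P (j + 1))))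
      ≤ ∑ j ∈ range n, max (1 - G (P j) + G (P (j + 1))) 0 := by
    apply Finset.sum_le_sum
    intro j _
    rcases hθ01 j with h | h
    · rw [h, zero_mul]; exact le_max_right _ 0
    · rw [h, one_mul]
      have e : 1 - (G (P j) - G (P (j + 1))) = 1 - G (P j) + G (P (j + 1)) := by ring
      rw [e]; exact le_max_left _ _
  -- LHS rewrite
  have hLHS : ∑ k ∈ range n, max (1 - G k + G (k + 1)) 0
      = ∑ k ∈ range n, (φ k - gap k * φ k) := by
    apply Finset.sum_congr rfl
    intro k _
    have hgk : gap k = G k - G (k + 1) := hgapdef k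
    rw [hφdef]
    by_cases hg : gap k ≤ 1
    · rw [if_pos hg, max_eq_left (by rw [hgk] at hg; linarith)]
      rw [hgk]; ring
    · rw [if_neg hg, max_eq_right (by rw [hgk] at hg; push_neg at hg; linarith)]
      ring
  calc ∑ k ∈ range n, max (1 - G k + G (k + 1)) 0
      = ∑ k ∈ range n, (φ k - gap k * φ k) := hLHS
    _ = ∑ k ∈ range n, φ k - ∑ k ∈ range n, gap k * φ k := Finset.sum_sub_distrib _ _
    _ ≤ ∑ j ∈ range n, θ j - ∑ k ∈ range n, gap k * Sg k := by
        have hgs : ∑ k ∈ range n, gap k * Sg k ≤ ∑ k ∈ range n, gap k * φ k := by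
          apply Finset.sum_le_sum
          intro k hk
          exact mul_le_mul_of_nonneg_left (hSgφ k (Finset.mem_range.mp hk))
            (le_of_lt (hgap k (Finset.mem_range.mp hk)))
        linarith
    _ = ∑ j ∈ range n, θ j * (1 - (G (P j) - G (P (j + 1)))) := hT2.symm
    _ ≤ ∑ j ∈ range n, max (1 - G (P j) + G (P (j + 1))) 0 := hT1


/-- The permutation loss `L(u,a) = ∑ᵢ (1 - u_{a(i)} + u_{a(i+1)})₊` is minimized,
over all permutations `a`, by the permutation sorting `u` in decreasing order. -/
theorem permutation_loss_argmin_sort {d : ℕ} (u : Fin d → ℝ)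
    (hu : Function.Injective u) (asort : Equiv.Perm (Fin d))
    (hsort : ∀ i : Fin (d - 1),
      u (asort ⟨i.1 + 1, by have := i.isLt; omega⟩) < u (asort ⟨i.1, by have := i.isLt; omega⟩)) :
    ∀ a : Equiv.Perm (Fin d),
      (∑ i : Fin (d - 1),
        max (1 - u (asort ⟨i.1, by have := i.isLt; omega⟩)
              + u (asort ⟨i.1 + 1, by have := i.isLt; omega⟩)) 0) ≤
      ∑ i : Fin (d - 1),
        max (1 - u (a ⟨i.1, by have := i.isLt; omega⟩)
              + u (a ⟨i.1 + 1, by have := i.isLt; omega⟩)) 0 := by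
    classical
  intro a
  by_cases hd1 : d ≤ 1
  · haveI : IsEmpty (Fin (d - 1)) := by
      have h0 : d - 1 = 0 := by omega
      rw [h0]; infer_instance
    rw [Finset.univ_eq_empty, Finset.sum_empty, Finset.sum_empty]
  push_neg at hd1
  have hpos : ∀ j : ℕ, min j (d - 1) < d := by intro j; omega
  obtain ⟨G, hGdef⟩ : ∃ G : ℕ → ℝ,
      ∀ j, G j = u (asort ⟨min j (d - 1), hpos j⟩) := ⟨_, fun _ => rfl⟩
  obtain ⟨P, hPdef⟩ : ∃ P : ℕ → ℕ,
      ∀ j, P j = (asort.symm (a ⟨min j (d - 1), hpos j⟩)).1 := ⟨_, fun _ => rfl⟩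
  have hP : ∀ j, P j ≤ d - 1 := by
    intro j
    rw [hPdef]
    have := (asort.symm (a ⟨min j (d - 1), hpos j⟩)).isLt
    omega
  have hGanti : ∀ k, k < d - 1 → G (k + 1) < G k := by
    intro k hk
    have h := hsort ⟨k, hk⟩
    rw [hGdef, hGdef]
    have e1 : (⟨min (k + 1) (d - 1), hpos (k + 1)⟩ : Fin d) = ⟨k + 1, by omega⟩ := by
      apply Fin.ext
      show min (k + 1) (d - 1) = k + 1
      omega
    have e2 : (⟨min k (d - 1), hpos k⟩ : Fin d) = ⟨k, by omega⟩ := by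
      apply Fin.ext
      show min k (d - 1) = k
      omega
    rw [e1, e2]
    exact h
  have hVG : ∀ j, u (a ⟨min j (d - 1), hpos j⟩) = G (P j) := by
    intro j
    rw [hGdef, hPdef]
    have e : (⟨min ((asort.symm (a ⟨min j (d - 1), hpos j⟩)).1) (d - 1),
        hpos _⟩ : Fin d) = asort.symm (a ⟨min j (d - 1), hpos j⟩) := by
      apply Fin.ext
      show min _ (d - 1) = _
      have := (asort.symm (a ⟨min j (d - 1), hpos j⟩)).isLt
      omega
    rw [e, Equiv.apply_symm_apply]
  have hsum : ∀ b : Equiv.Perm (Fin d),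
      (∑ i : Fin (d - 1),
        max (1 - u (b ⟨i.1, by have := i.isLt; omega⟩)
              + u (b ⟨i.1 + 1, by have := i.isLt; omega⟩)) 0)
        = ∑ j ∈ Finset.range (d - 1),
            max (1 - u (b ⟨min j (d - 1), hpos j⟩)
              + u (b ⟨min (j + 1) (d - 1), hpos (j + 1)⟩)) 0 := by
    intro b
    rw [← Fin.sum_univ_eq_sum_range (fun j =>
      max (1 - u (b ⟨min j (d - 1), hpos j⟩)
        + u (b ⟨min (j + 1) (d - 1), hpos (j + 1)⟩)) 0) (d - 1)]
    apply Finset.sum_congr rfl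
    intro i _
    have hi := i.isLt
    have e1 : (⟨min i.1 (d - 1), hpos i.1⟩ : Fin d) = ⟨i.1, by omega⟩ := by
      apply Fin.ext
      show min i.1 (d - 1) = i.1
      omega
    have e2 : (⟨min (i.1 + 1) (d - 1), hpos (i.1 + 1)⟩ : Fin d) = ⟨i.1 + 1, by omega⟩ := by
      apply Fin.ext
      show min (i.1 + 1) (d - 1) = i.1 + 1
      omega
    rw [e1, e2]
  rw [hsum asort, hsum a]
  have hL : ∑ j ∈ Finset.range (d - 1),
      max (1 - u (asort ⟨min j (d - 1), hpos j⟩)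
        + u (asort ⟨min (j + 1) (d - 1), hpos (j + 1)⟩)) 0
      = ∑ k ∈ Finset.range (d - 1), max (1 - G k + G (k + 1)) 0 :=
    Finset.sum_congr rfl fun j _ => by rw [hGdef, hGdef]
  have hR : ∑ j ∈ Finset.range (d - 1),
      max (1 - u (a ⟨min j (d - 1), hpos j⟩)
        + u (a ⟨min (j + 1) (d - 1), hpos (j + 1)⟩)) 0
      = ∑ j ∈ Finset.range (d - 1), max (1 - G (P j) + G (P (j + 1))) 0 :=
    Finset.sum_congr rfl fun j _ => by rw [hVG j, hVG (j + 1)]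
  rw [hL, hR]
  exact main_aux (d - 1) G P hGanti hP
end

section
/- At any stationary point (X, Y) of the quadratically regularized PCA objective f(X,Y) = ‖A − XY‖_F² + γ‖X‖_F² + γ‖Y‖_F² with γ > 0, one has XᵀX = YYᵀ. -/
open Matrix

/-- At any stationary point of quadratically regularized PCA with `γ > 0`,
`XᵀX = YYᵀ`. -/
theorem stationary_point_gram_eq {m n k : ℕ} (A : Matrix (Fin m) (Fin n) ℝ)
    (X : Matrix (Fin m) (Fin k) ℝ) (Y : Matrix (Fin k) (Fin n) ℝ)
    (γ : ℝ) (hγ : 0 < γ)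
    (h1 : -((A - X * Y) * Yᵀ) + γ • X = 0)
    (h2 : -((A - X * Y)ᵀ * X) + γ • Yᵀ = 0) :
    Xᵀ * X = Y * Yᵀ := by
  have e1 : (A - X * Y) * Yᵀ = γ • X := neg_add_eq_zero.mp h1
  have e2 : (A - X * Y)ᵀ * X = γ • Yᵀ := neg_add_eq_zero.mp h2
  have e2' : Xᵀ * (A - X * Y) = γ • Y := by
    have := congrArg Matrix.transpose e2
    simpa [Matrix.transpose_mul, Matrix.transpose_smul] using this
  have key : γ • (Xᵀ * X) = γ • (Y * Yᵀ) := by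
    calc γ • (Xᵀ * X) = Xᵀ * ((A - X * Y) * Yᵀ) := by rw [e1, Matrix.mul_smul]
    _ = (Xᵀ * (A - X * Y)) * Yᵀ := by rw [Matrix.mul_assoc]
    _ = γ • (Y * Yᵀ) := by rw [e2', Matrix.smul_mul]
  exact smul_right_injective _ hγ.ne' key
end

section
/- Let A ∈ ℝ^{m×n} with singular values σ₁ ≥ ⋯ ≥ σ_r > 0 and suppose σ_k > σ_{k+1} (with σ_{k+1} := 0 if k ≥ r). If γ < σ_k, then the minimum value of ‖A − XY‖_F² + γ‖X‖_F² + γ‖Y‖_F² over X ∈ ℝ^{m×k}, Y ∈ ℝ^{k×n} equals ∑_{i>k} σᵢ² + ∑_{i=1}^{k} (γ² + 2γ(σᵢ − γ)) = ∑_{i>k} σᵢ² + ∑_{i=1}^{k} (2γσᵢ − γ²). -/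
open Matrix BigOperators

lemma sum_mul_sum_comm {α β γ' : Type*} [Fintype α] [Fintype β] [Fintype γ']
    (F : α → β → ℝ) (G : α → γ' → ℝ) :
    ∑ a, (∑ b, F a b) * (∑ c, G a c) = ∑ b, ∑ c, ∑ a, F a b * G a c := by
  simp only [Finset.sum_mul_sum]
  rw [Finset.sum_comm]
  exact Finset.sum_congr rfl fun b _ => Finset.sum_comm

lemma sum_swap4 {α β γ' δ : Type*} [Fintype α] [Fintype β] [Fintype γ'] [Fintype δ]
    (F : α → β → γ' → δ → ℝ) :
    ∑ a, ∑ b, ∑ i, ∑ j, F a b i j = ∑ i, ∑ j, ∑ a, ∑ b, F a b i j := by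
  calc ∑ a, ∑ b, ∑ i, ∑ j, F a b i j
      = ∑ a, ∑ i, ∑ b, ∑ j, F a b i j :=
        Finset.sum_congr rfl fun a _ => Finset.sum_comm
    _ = ∑ i, ∑ a, ∑ b, ∑ j, F a b i j := Finset.sum_comm
    _ = ∑ i, ∑ a, ∑ j, ∑ b, F a b i j :=
        Finset.sum_congr rfl fun i _ => Finset.sum_congr rfl fun a _ => Finset.sum_comm
    _ = ∑ i, ∑ j, ∑ a, ∑ b, F a b i j :=
        Finset.sum_congr rfl fun i _ => Finset.sum_comm

lemma sum_if_lt {r k : ℕ} (hkr : k ≤ r) (f : Fin r → ℝ) :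
    (∑ i : Fin r, if (i : ℕ) < k then f i else 0) = ∑ j : Fin k, f (Fin.castLE hkr j) := by
  classical
  rw [← Finset.sum_filter]
  refine Finset.sum_bij' (fun i hi => (⟨(i : ℕ), (Finset.mem_filter.mp hi).2⟩ : Fin k))
    (fun j _ => Fin.castLE hkr j) ?_ ?_ ?_ ?_ ?_
  · intro a ha; exact Finset.mem_univ _
  · intro a _; simp [Finset.mem_filter, a.2]
  · intro a ha; ext; simp [Fin.castLE]
  · intro a _; ext; simp [Fin.castLE]
  · intro a ha; congr 1

lemma sumsq_eq_zero {N : ℕ} (f : Fin N → ℝ) (h : ∑ a, f a * f a = 0) : ∀ a, f a = 0 := by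
  intro a
  have h2 : ∀ b ∈ Finset.univ, (0:ℝ) ≤ f b * f b := fun b _ => mul_self_nonneg _
  exact mul_self_eq_zero.mp ((Finset.sum_eq_zero_iff_of_nonneg h2).mp h a (Finset.mem_univ a))

lemma bessel {N : ℕ} {ι : Type*} [Fintype ι] [DecidableEq ι] (e : ι → Fin N → ℝ) (d : ι → ℝ)
    (h : ∀ j l, (∑ a, e j a * e l a) = if j = l then d j else 0) (x : Fin N → ℝ) :
    ∑ j, (if d j = 0 then (0:ℝ) else (∑ a, x a * e j a) ^ 2 / d j) ≤ ∑ a, x a ^ 2 := by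
  classical
  set β : ι → ℝ := fun j => ∑ a, x a * e j a with hβ
  set c : ι → ℝ := fun j => if d j = 0 then 0 else β j / d j with hc
  have hcβ : ∀ j, c j * β j = if d j = 0 then (0:ℝ) else β j ^ 2 / d j := by
    intro j
    by_cases hd : d j = 0 <;> simp [hc, hd] <;> field_simp <;> ring
  have hccd : ∀ j, c j * c j * d j = if d j = 0 then (0:ℝ) else β j ^ 2 / d j := by
    intro j
    by_cases hd : d j = 0 <;> simp [hc, hd] <;> field_simp <;> ring
  have key : (0:ℝ) ≤ ∑ a, (x a - ∑ j, c j * e j a) ^ 2 := Finset.sum_nonneg fun a _ => sq_nonneg _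
  have mid : ∑ a, x a * ∑ j, c j * e j a = ∑ j, c j * β j := by
    simp_rw [Finset.mul_sum]
    rw [Finset.sum_comm]
    refine Finset.sum_congr rfl fun j _ => ?_
    rw [hβ]; simp only [Finset.mul_sum]
    exact Finset.sum_congr rfl fun a _ => by ring
  have last : ∑ a, (∑ j, c j * e j a) * (∑ l, c l * e l a) = ∑ j, c j * c j * d j := by
    rw [sum_mul_sum_comm (fun a j => c j * e j a) (fun a l => c l * e l a)]
    refine Finset.sum_congr rfl fun j _ => ?_
    have hterm : ∀ l, (∑ a, (c j * e j a) * (c l * e l a)) = c j * c l * (if j = l then d j else 0) := by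
      intro l
      rw [← h j l, Finset.mul_sum]
      exact Finset.sum_congr rfl fun a _ => by ring
    rw [Finset.sum_congr rfl fun l _ => hterm l]
    simp [mul_ite, Finset.sum_ite_eq]
  have expand : ∑ a, (x a - ∑ j, c j * e j a) ^ 2
      = ∑ a, x a ^ 2 - 2 * ∑ j, c j * β j + ∑ j, c j * c j * d j := by
    rw [← mid, ← last]
    calc ∑ a, (x a - ∑ j, c j * e j a) ^ 2
        = ∑ a, (x a ^ 2 - 2 * (x a * ∑ j, c j * e j a)
            + (∑ j, c j * e j a) * (∑ l, c l * e l a)) :=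
          Finset.sum_congr rfl fun a _ => by ring
      _ = ∑ a, x a ^ 2 - ∑ a, 2 * (x a * ∑ j, c j * e j a)
            + ∑ a, (∑ j, c j * e j a) * (∑ l, c l * e l a) := by
          rw [Finset.sum_add_distrib, Finset.sum_sub_distrib]
      _ = _ := by rw [← Finset.mul_sum]
  have hS : ∑ j, c j * β j = ∑ j, (if d j = 0 then (0:ℝ) else β j ^ 2 / d j) :=
    Finset.sum_congr rfl fun j _ => hcβ j
  have hS2 : ∑ j, c j * c j * d j = ∑ j, (if d j = 0 then (0:ℝ) else β j ^ 2 / d j) :=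
    Finset.sum_congr rfl fun j _ => hccd j
  rw [expand, hS, hS2] at key
  linarith

lemma scalarS {γ d σ' : ℝ} (hγ : 0 ≤ γ) (hd : 0 ≤ d) (hp : 0 < d + γ) (hσ : 0 < σ') :
    d * σ' ^ 2 / (d + γ) ≤ (if γ < σ' then (σ' - γ) ^ 2 else 0) + γ * d := by
  rw [div_le_iff₀ hp]
  by_cases hc : γ < σ'
  · simp only [if_pos hc]
    nlinarith [mul_nonneg hγ (sq_nonneg (d + γ - σ'))]
  · simp only [if_neg hc]
    push_neg at hc
    have hσγ : σ' ^ 2 ≤ γ ^ 2 := by nlinarith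
    nlinarith [mul_le_mul_of_nonneg_left hσγ hd, mul_nonneg (mul_nonneg hγ hd) hd]

lemma keyIneq {ι : Type*} [Fintype ι] (γ d : ℝ) (hγ : 0 ≤ γ) (hd : 0 ≤ d)
    (σ t : ι → ℝ) (hσ : ∀ i, 0 < σ i) (ht0 : ∀ i, 0 ≤ t i) (ht1 : ∑ i, t i ≤ 1) :
    d * (∑ i, t i * σ i ^ 2) / (d + γ) - γ * d
      ≤ ∑ i, t i * (if γ < σ i then (σ i - γ) ^ 2 else 0) := by
  by_cases hp : d + γ = 0
  · have hd0 : d = 0 := by linarith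
    simp only [hd0, zero_mul, zero_div, mul_zero, sub_zero]
    exact Finset.sum_nonneg fun i _ => mul_nonneg (ht0 i) (by positivity)
  · have hp' : 0 < d + γ := lt_of_le_of_ne (by linarith) (Ne.symm hp)
    have step : ∀ i, t i * (d * σ i ^ 2 / (d + γ))
        ≤ t i * ((if γ < σ i then (σ i - γ) ^ 2 else 0) + γ * d) := fun i =>
      mul_le_mul_of_nonneg_left (scalarS hγ hd hp' (hσ i)) (ht0 i)
    have lhs_eq : d * (∑ i, t i * σ i ^ 2) / (d + γ) = ∑ i, t i * (d * σ i ^ 2 / (d + γ)) := by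
      rw [Finset.mul_sum, Finset.sum_div]
      exact Finset.sum_congr rfl fun i _ => by ring
    have h2 : ∑ i, t i * ((if γ < σ i then (σ i - γ) ^ 2 else 0) + γ * d)
        = ∑ i, t i * (if γ < σ i then (σ i - γ) ^ 2 else 0) + (γ * d) * ∑ i, t i := by
      rw [Finset.mul_sum, ← Finset.sum_add_distrib]
      exact Finset.sum_congr rfl fun i _ => by ring
    have h3 : (γ * d) * ∑ i, t i ≤ γ * d := by
      nlinarith [mul_nonneg hγ hd]
    calc d * (∑ i, t i * σ i ^ 2) / (d + γ) - γ * d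
        = (∑ i, t i * (d * σ i ^ 2 / (d + γ))) - γ * d := by rw [lhs_eq]
      _ ≤ (∑ i, t i * ((if γ < σ i then (σ i - γ) ^ 2 else 0) + γ * d)) - γ * d := by
          have := Finset.sum_le_sum fun i (_ : i ∈ Finset.univ) => step i
          linarith
      _ ≤ _ := by rw [h2]; linarith

lemma topk {r k : ℕ} (hkr : k ≤ r) (h c : Fin r → ℝ) (hh0 : ∀ i, 0 ≤ h i)
    (hhmono : ∀ i j : Fin r, i ≤ j → h j ≤ h i) (hc0 : ∀ i, 0 ≤ c i) (hc1 : ∀ i, c i ≤ 1)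
    (hsum : ∑ i, c i ≤ (k : ℝ)) :
    ∑ i, c i * h i ≤ ∑ i : Fin r, (if (i : ℕ) < k then h i else 0) := by
  classical
  set hk : ℝ := if hk' : k < r then h ⟨k, hk'⟩ else 0 with hhk
  have hk0 : 0 ≤ hk := by
    by_cases hk' : k < r
    · simp only [hhk, dif_pos hk']; exact hh0 _
    · simp [hhk, hk']
  have hge : ∀ i : Fin r, k ≤ (i : ℕ) → h i ≤ hk := by
    intro i hi
    have hk' : k < r := lt_of_le_of_lt hi i.2
    simp only [hhk, dif_pos hk']
    exact hhmono ⟨k, hk'⟩ i (by simpa [Fin.le_def] using hi)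
  have hle : ∀ i : Fin r, (i : ℕ) < k → hk ≤ h i := by
    intro i hi
    by_cases hk' : k < r
    · simp only [hhk, dif_pos hk']
      refine hhmono i ⟨k, hk'⟩ ?_
      simp only [Fin.le_def]
      omega
    · simp only [hhk, dif_neg hk']
      exact hh0 i
  have count : ∑ i : Fin r, (if (i : ℕ) < k then (1:ℝ) else 0) = (k : ℝ) := by
    rw [sum_if_lt hkr fun _ => (1:ℝ)]
    simp
  have per : ∀ i : Fin r, c i * h i - (if (i : ℕ) < k then h i else 0)
      ≤ hk * (c i - (if (i : ℕ) < k then (1:ℝ) else 0)) := by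
    intro i
    by_cases hi : (i : ℕ) < k
    · simp only [if_pos hi]
      have h1 : hk ≤ h i := hle i hi
      nlinarith [hc1 i]
    · simp only [if_neg hi]
      have h1 : h i ≤ hk := hge i (le_of_not_gt hi)
      nlinarith [hc0 i]
  have total := Finset.sum_le_sum fun i (_ : i ∈ Finset.univ) => per i
  rw [Finset.sum_sub_distrib] at total
  have rhs_eq : ∑ i : Fin r, hk * (c i - (if (i : ℕ) < k then (1:ℝ) else 0))
      = hk * ((∑ i, c i) - (k:ℝ)) := by
    rw [← Finset.mul_sum, Finset.sum_sub_distrib, count]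
  rw [rhs_eq] at total
  nlinarith [mul_nonneg hk0 (sub_nonneg.mpr hsum)]

lemma sumsq_orth {n r : ℕ} (v : Fin r → Fin n → ℝ)
    (hv : ∀ i j, (∑ b, v i b * v j b) = if i = j then (1:ℝ) else 0) (c : Fin r → ℝ) :
    ∑ b, (∑ i, c i * v i b) ^ 2 = ∑ i, c i ^ 2 := by
  have key : ∑ b, (∑ i, c i * v i b) * (∑ l, c l * v l b) = ∑ i, c i ^ 2 := by
    rw [sum_mul_sum_comm (fun b i => c i * v i b) (fun b l => c l * v l b)]
    have h1 : ∀ i, ∀ l, (∑ b, (c i * v i b) * (c l * v l b))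
        = c i * c l * (if i = l then (1:ℝ) else 0) := by
      intro i l
      rw [← hv i l, Finset.mul_sum]
      exact Finset.sum_congr rfl fun b _ => by ring
    calc ∑ i, ∑ l, ∑ b, (c i * v i b) * (c l * v l b)
        = ∑ i, ∑ l, c i * c l * (if i = l then (1:ℝ) else 0) :=
          Finset.sum_congr rfl fun i _ => Finset.sum_congr rfl fun l _ => h1 i l
      _ = ∑ i, c i ^ 2 := by
          refine Finset.sum_congr rfl fun i _ => ?_
          simp [mul_ite, Finset.sum_ite_eq]
          ring
  rw [← key]
  exact Finset.sum_congr rfl fun b _ => by ring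

lemma spectral {k : ℕ} (H : Matrix (Fin k) (Fin k) ℝ) (hH : H.IsHermitian) :
    ∃ w : Fin k → Fin k → ℝ,
      (∀ j l, (∑ b, w j b * w l b) = if j = l then (1:ℝ) else 0) ∧
      (∀ j b, (∑ c, H b c * w j c) = hH.eigenvalues j * w j b) := by
  classical
  refine ⟨fun j => (hH.eigenvectorBasis j : Fin k → ℝ), ?_, ?_⟩
  · intro j l
    have := (orthonormal_iff_ite.mp hH.eigenvectorBasis.orthonormal) j l
    simpa [PiLp.inner_apply, RCLike.inner_apply, mul_comm] using this
  · intro j b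
    have hb := congrFun (hH.mulVec_eigenvectorBasis j) b
    simpa [Matrix.mulVec, dotProduct, WithLp.equiv] using hb

lemma rows_orth_of_cols_orth {k : ℕ} (w : Fin k → Fin k → ℝ)
    (hw : ∀ j l, (∑ b, w j b * w l b) = if j = l then (1:ℝ) else 0) :
    ∀ b b', (∑ j, w j b * w j b') = if b = b' then (1:ℝ) else 0 := by
  classical
  set M : Matrix (Fin k) (Fin k) ℝ := Matrix.of fun j b => w j b with hM
  have h1 : M * Mᵀ = 1 := by
    ext j l
    simp only [Matrix.mul_apply, Matrix.transpose_apply, hM, Matrix.of_apply]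
    rw [hw j l]
    simp [Matrix.one_apply]
  have h2 : Mᵀ * M = 1 := mul_eq_one_comm.mp h1
  intro b b'
  have := congrFun (congrFun h2 b) b'
  simp only [Matrix.mul_apply, Matrix.transpose_apply, hM, Matrix.of_apply,
    Matrix.one_apply] at this
  exact this

lemma frob_orth {m n r : ℕ} (u : Fin r → Fin m → ℝ) (v : Fin r → Fin n → ℝ)
    (hu : ∀ i j, (∑ a, u i a * u j a) = if i = j then (1:ℝ) else 0)
    (hv : ∀ i j, (∑ b, v i b * v j b) = if i = j then (1:ℝ) else 0)
    (c : Fin r → ℝ) :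
    ∑ a, ∑ b, (∑ i, c i * (u i a * v i b)) ^ 2 = ∑ i, c i ^ 2 := by
  have per : ∀ a : Fin m, ∑ b, (∑ i, (c i * u i a) * v i b) ^ 2 = ∑ i, (c i * u i a) ^ 2 :=
    fun a => sumsq_orth v hv _
  calc ∑ a, ∑ b, (∑ i, c i * (u i a * v i b)) ^ 2
      = ∑ a, ∑ i, (c i * u i a) ^ 2 := by
        refine Finset.sum_congr rfl fun a _ => ?_
        rw [← per a]
        refine Finset.sum_congr rfl fun b _ => ?_
        congr 1
        exact Finset.sum_congr rfl fun i _ => by ring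
    _ = ∑ i, ∑ a, (c i * u i a) ^ 2 := Finset.sum_comm
    _ = ∑ i, c i ^ 2 := by
        refine Finset.sum_congr rfl fun i _ => ?_
        have h1 : ∑ a, (c i * u i a) ^ 2 = c i ^ 2 * ∑ a, u i a * u i a := by
          rw [Finset.mul_sum]; exact Finset.sum_congr rfl fun a _ => by ring
        rw [h1, hu i i]; simp

/-- The minimum value of quadratically regularized PCA: if `A` has singular
values `σ₁ ≥ ⋯ ≥ σ_r > 0`, with a gap between the top `k` and the rest, and
`γ < σᵢ` for `i ≤ k`, then the minimum of
`‖A − XY‖_F² + γ‖X‖_F² + γ‖Y‖_F²` equals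
`∑_{i>k} σᵢ² + ∑_{i≤k} (2γσᵢ − γ²)`, and it is attained. -/
theorem qpca_min_value {m n r k : ℕ} (hkr : k ≤ r) (γ : ℝ) (hγ : 0 ≤ γ)
    (σ : Fin r → ℝ) (hpos : ∀ i, 0 < σ i)
    (hmono : ∀ i j : Fin r, i ≤ j → σ j ≤ σ i)
    (hgap : ∀ i j : Fin r, (i : ℕ) < k → k ≤ (j : ℕ) → σ j < σ i)
    (hγk : ∀ i : Fin r, (i : ℕ) < k → γ < σ i)
    (u : Fin r → Fin m → ℝ) (v : Fin r → Fin n → ℝ)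
    (hu : ∀ i j, (∑ t, u i t * u j t) = if i = j then (1 : ℝ) else 0)
    (hv : ∀ i j, (∑ t, v i t * v j t) = if i = j then (1 : ℝ) else 0)
    (A : Matrix (Fin m) (Fin n) ℝ)
    (hA : A = ∑ i, σ i • Matrix.vecMulVec (u i) (v i)) :
    IsLeast {c : ℝ | ∃ (X : Matrix (Fin m) (Fin k) ℝ) (Y : Matrix (Fin k) (Fin n) ℝ),
        c = frobSq (A - X * Y) + γ * frobSq X + γ * frobSq Y}
      (∑ i : Fin r, if (i : ℕ) < k then 2 * γ * σ i - γ ^ 2 else σ i ^ 2) := by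
  classical
  have hA_apply : ∀ a b, A a b = ∑ i, σ i * (u i a * v i b) := by
    intro a b
    rw [hA]
    simp only [Matrix.sum_apply, Matrix.smul_apply, Matrix.vecMulVec_apply, smul_eq_mul]
  constructor
  · -- membership
    set e : Fin k → Fin r := Fin.castLE hkr with he
    have hs : ∀ j : Fin k, 0 < σ (e j) - γ := by
      intro j
      have := hγk (e j) (by simpa [he, Fin.castLE] using j.2)
      linarith
    set X₀ : Matrix (Fin m) (Fin k) ℝ :=
      Matrix.of fun a j => Real.sqrt (σ (e j) - γ) * u (e j) a with hX₀
    set Y₀ : Matrix (Fin k) (Fin n) ℝ :=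
      Matrix.of fun j b => Real.sqrt (σ (e j) - γ) * v (e j) b with hY₀
    refine ⟨X₀, Y₀, ?_⟩
    have hdiff : ∀ a b, (A - X₀ * Y₀) a b
        = ∑ i : Fin r, (if (i : ℕ) < k then γ else σ i) * (u i a * v i b) := by
      intro a b
      have hXY : (X₀ * Y₀) a b
          = ∑ i : Fin r, (if (i : ℕ) < k then (σ i - γ) * (u i a * v i b) else 0) := by
        rw [sum_if_lt hkr fun i => (σ i - γ) * (u i a * v i b)]
        rw [Matrix.mul_apply]
        refine Finset.sum_congr rfl fun j _ => ?_
        have hsq : Real.sqrt (σ (e j) - γ) * Real.sqrt (σ (e j) - γ) = σ (e j) - γ :=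
          Real.mul_self_sqrt (le_of_lt (hs j))
        simp only [hX₀, hY₀, Matrix.of_apply]
        calc Real.sqrt (σ (e j) - γ) * u (e j) a * (Real.sqrt (σ (e j) - γ) * v (e j) b)
            = (Real.sqrt (σ (e j) - γ) * Real.sqrt (σ (e j) - γ)) * (u (e j) a * v (e j) b) := by
              ring
          _ = (σ (e j) - γ) * (u (e j) a * v (e j) b) := by rw [hsq]
      rw [Matrix.sub_apply, hA_apply a b, hXY, ← Finset.sum_sub_distrib]
      refine Finset.sum_congr rfl fun i _ => ?_
      by_cases hik : (i : ℕ) < k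
      · simp only [if_pos hik]; ring
      · simp only [if_neg hik]; ring
    have f1 : frobSq (A - X₀ * Y₀) = ∑ i : Fin r, (if (i : ℕ) < k then γ else σ i) ^ 2 := by
      unfold frobSq
      rw [← frob_orth u v hu hv (fun i => if (i : ℕ) < k then γ else σ i)]
      exact Finset.sum_congr rfl fun a _ => Finset.sum_congr rfl fun b _ => by rw [hdiff a b]
    have f2 : frobSq X₀ = ∑ i : Fin r, (if (i : ℕ) < k then σ i - γ else 0) := by
      unfold frobSq
      rw [sum_if_lt hkr fun i => σ i - γ, Finset.sum_comm]
      refine Finset.sum_congr rfl fun j _ => ?_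
      have h1 : ∀ a, (X₀ a j) ^ 2 = (σ (e j) - γ) * (u (e j) a * u (e j) a) := by
        intro a
        simp only [hX₀, Matrix.of_apply]
        have hsq : Real.sqrt (σ (e j) - γ) * Real.sqrt (σ (e j) - γ) = σ (e j) - γ :=
          Real.mul_self_sqrt (le_of_lt (hs j))
        calc (Real.sqrt (σ (e j) - γ) * u (e j) a) ^ 2
            = (Real.sqrt (σ (e j) - γ) * Real.sqrt (σ (e j) - γ)) * (u (e j) a * u (e j) a) := by
              ring
          _ = _ := by rw [hsq]
      rw [Finset.sum_congr rfl fun a _ => h1 a, ← Finset.mul_sum, hu (e j) (e j)]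
      simp [he]
    have f3 : frobSq Y₀ = ∑ i : Fin r, (if (i : ℕ) < k then σ i - γ else 0) := by
      unfold frobSq
      rw [sum_if_lt hkr fun i => σ i - γ]
      refine Finset.sum_congr rfl fun j _ => ?_
      have h1 : ∀ b, (Y₀ j b) ^ 2 = (σ (e j) - γ) * (v (e j) b * v (e j) b) := by
        intro b
        simp only [hY₀, Matrix.of_apply]
        have hsq : Real.sqrt (σ (e j) - γ) * Real.sqrt (σ (e j) - γ) = σ (e j) - γ :=
          Real.mul_self_sqrt (le_of_lt (hs j))
        calc (Real.sqrt (σ (e j) - γ) * v (e j) b) ^ 2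
            = (Real.sqrt (σ (e j) - γ) * Real.sqrt (σ (e j) - γ)) * (v (e j) b * v (e j) b) := by
              ring
          _ = _ := by rw [hsq]
      rw [Finset.sum_congr rfl fun b _ => h1 b, ← Finset.mul_sum, hv (e j) (e j)]
      simp [he]
    rw [f1, f2, f3]
    simp only [Finset.mul_sum]
    rw [← Finset.sum_add_distrib, ← Finset.sum_add_distrib]
    refine Finset.sum_congr rfl fun i _ => ?_
    by_cases hik : (i : ℕ) < k
    · simp only [if_pos hik]; ring
    · simp only [if_neg hik]; ring
  · rintro c ⟨X, Y, rfl⟩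
    have hPSD := Matrix.posSemidef_conjTranspose_mul_self X
    obtain ⟨w, hw_on, hw_eig⟩ := spectral (Xᴴ * X) hPSD.1
    set d : Fin k → ℝ := hPSD.1.eigenvalues with hddef
    have hd : ∀ j, 0 ≤ d j := fun j => hPSD.eigenvalues_nonneg j
    have hH_apply : ∀ b c', (Xᴴ * X) b c' = ∑ a, X a b * X a c' := by
      intro b c'
      simp [Matrix.mul_apply, Matrix.conjTranspose_apply]
    set z : Fin k → Fin m → ℝ := fun j a => ∑ bb, X a bb * w j bb with hzd
    set y' : Fin k → Fin n → ℝ := fun j b => ∑ cc, w j cc * Y cc b with hyd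
    set β : Fin r → Fin k → ℝ := fun i j => ∑ a, u i a * z j a with hβd
    set t : Fin r → Fin k → ℝ := fun i j => if d j = 0 then 0 else β i j ^ 2 / d j with htd
    have hez : ∀ j l, (∑ a, z j a * z l a) = if j = l then d j else 0 := by
      intro j l
      have inner1 : ∀ bb cc, (∑ a, (X a bb * w j bb) * (X a cc * w l cc))
          = w j bb * ((Xᴴ * X) bb cc * w l cc) := by
        intro bb cc
        rw [hH_apply bb cc, Finset.sum_mul, Finset.mul_sum]
        exact Finset.sum_congr rfl fun a _ => by ring
      calc ∑ a, z j a * z l a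
          = ∑ bb, ∑ cc, ∑ a, (X a bb * w j bb) * (X a cc * w l cc) :=
            sum_mul_sum_comm (fun a bb => X a bb * w j bb) (fun a cc => X a cc * w l cc)
        _ = ∑ bb, w j bb * (∑ cc, (Xᴴ * X) bb cc * w l cc) := by
            refine Finset.sum_congr rfl fun bb _ => ?_
            rw [Finset.sum_congr rfl fun cc _ => inner1 bb cc, ← Finset.mul_sum]
        _ = ∑ bb, w j bb * (d l * w l bb) := by
            refine Finset.sum_congr rfl fun bb _ => ?_
            rw [hw_eig l bb]
        _ = d l * ∑ bb, w j bb * w l bb := by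
            rw [Finset.mul_sum]
            exact Finset.sum_congr rfl fun bb _ => by ring
        _ = if j = l then d j else 0 := by
            rw [hw_on j l]
            by_cases hjl : j = l
            · subst hjl; simp
            · simp [hjl]
    have hWWT := rows_orth_of_cols_orth w hw_on
    have hXYz : ∀ a b, (X * Y) a b = ∑ j, z j a * y' j b := by
      intro a b
      calc (X * Y) a b = ∑ bb, X a bb * Y bb b := Matrix.mul_apply
        _ = ∑ bb, ∑ cc, (X a bb * Y cc b) * (if bb = cc then (1:ℝ) else 0) := by
            refine Finset.sum_congr rfl fun bb _ => ?_
            simp [mul_ite, Finset.sum_ite_eq]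
        _ = ∑ bb, ∑ cc, (X a bb * Y cc b) * (∑ j, w j bb * w j cc) := by
            refine Finset.sum_congr rfl fun bb _ => Finset.sum_congr rfl fun cc _ => ?_
            rw [hWWT bb cc]
        _ = ∑ bb, ∑ cc, ∑ j, (X a bb * w j bb) * (w j cc * Y cc b) := by
            refine Finset.sum_congr rfl fun bb _ => Finset.sum_congr rfl fun cc _ => ?_
            rw [Finset.mul_sum]
            exact Finset.sum_congr rfl fun j _ => by ring
        _ = ∑ j, z j a * y' j b :=
            (sum_mul_sum_comm (fun j bb => X a bb * w j bb) (fun j cc => w j cc * Y cc b)).symm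
    have hfX : frobSq X = ∑ j, d j := by
      unfold frobSq
      calc ∑ a, ∑ bb, X a bb ^ 2
          = ∑ a, ∑ j, (∑ bb, X a bb * w j bb) ^ 2 :=
            Finset.sum_congr rfl fun a _ =>
              (sumsq_orth (fun bb j => w j bb) hWWT (fun bb => X a bb)).symm
        _ = ∑ j, ∑ a, z j a ^ 2 := Finset.sum_comm
        _ = ∑ j, d j := by
            refine Finset.sum_congr rfl fun j _ => ?_
            have h1 : ∑ a, z j a ^ 2 = ∑ a, z j a * z j a :=
              Finset.sum_congr rfl fun a _ => sq (z j a)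
            rw [h1, hez j j, if_pos rfl]
    set Sy : Fin k → ℝ := fun j => ∑ b, y' j b ^ 2 with hSyd
    set B : Fin k → Fin n → ℝ := fun j b => ∑ a, A a b * z j a with hBd
    set Bys : Fin k → ℝ := fun j => ∑ b, B j b * y' j b with hBysd
    have hfY : frobSq Y = ∑ j, Sy j := by
      unfold frobSq
      calc ∑ cc, ∑ b, Y cc b ^ 2
          = ∑ b, ∑ cc, Y cc b ^ 2 := Finset.sum_comm
        _ = ∑ b, ∑ j, (∑ cc, Y cc b * w j cc) ^ 2 :=
            Finset.sum_congr rfl fun b _ =>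
              (sumsq_orth (fun cc j => w j cc) hWWT (fun cc => Y cc b)).symm
        _ = ∑ j, ∑ b, (∑ cc, Y cc b * w j cc) ^ 2 := Finset.sum_comm
        _ = ∑ j, Sy j := by
            refine Finset.sum_congr rfl fun j _ => Finset.sum_congr rfl fun b _ => ?_
            simp only [hSyd, hyd]
            congr 1
            exact Finset.sum_congr rfl fun cc _ => by ring
    have hfrobA : frobSq A = ∑ i, σ i ^ 2 := by
      unfold frobSq
      rw [← frob_orth u v hu hv σ]
      exact Finset.sum_congr rfl fun a _ => Finset.sum_congr rfl fun b _ => by rw [hA_apply a b]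
    have hB : ∀ j b, B j b = ∑ i, (σ i * β i j) * v i b := by
      intro j b
      calc B j b = ∑ a, (∑ i, σ i * (u i a * v i b)) * z j a :=
            Finset.sum_congr rfl fun a _ => by rw [hA_apply a b]
        _ = ∑ a, ∑ i, (σ i * (u i a * v i b)) * z j a :=
            Finset.sum_congr rfl fun a _ => Finset.sum_mul _ _ _
        _ = ∑ i, ∑ a, (σ i * (u i a * v i b)) * z j a := Finset.sum_comm
        _ = ∑ i, (σ i * β i j) * v i b := by
            refine Finset.sum_congr rfl fun i _ => ?_
            simp only [hβd, Finset.mul_sum]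
            rw [Finset.sum_mul]
            exact Finset.sum_congr rfl fun a _ => by ring
    have hBsq : ∀ j, (∑ b, B j b ^ 2) = ∑ i, σ i ^ 2 * β i j ^ 2 := by
      intro j
      calc ∑ b, B j b ^ 2 = ∑ b, (∑ i, (σ i * β i j) * v i b) ^ 2 :=
            Finset.sum_congr rfl fun b _ => by rw [hB j b]
        _ = ∑ i, (σ i * β i j) ^ 2 := sumsq_orth v hv _
        _ = ∑ i, σ i ^ 2 * β i j ^ 2 := Finset.sum_congr rfl fun i _ => by ring
    have hz0 : ∀ j, d j = 0 → ∀ a, z j a = 0 := by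
      intro j hdj
      have h0 : ∑ a, z j a * z j a = 0 := by rw [hez j j, if_pos rfl, hdj]
      exact sumsq_eq_zero _ h0
    have hβ0 : ∀ i j, d j = 0 → β i j = 0 := by
      intro i j hdj
      simp only [hβd]
      exact Finset.sum_eq_zero fun a _ => by rw [hz0 j hdj a, mul_zero]
    have hsd : ∀ j, (∑ i, σ i ^ 2 * β i j ^ 2) = d j * (∑ i, t i j * σ i ^ 2) := by
      intro j
      by_cases hdj : d j = 0
      · rw [hdj, zero_mul]
        exact Finset.sum_eq_zero fun i _ => by rw [hβ0 i j hdj]; ring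
      · rw [Finset.mul_sum]
        refine Finset.sum_congr rfl fun i _ => ?_
        simp only [htd, if_neg hdj]
        field_simp
    have ht0 : ∀ i j, 0 ≤ t i j := by
      intro i j
      by_cases hdj : d j = 0
      · simp [htd, hdj]
      · simp only [htd, if_neg hdj]
        exact div_nonneg (sq_nonneg _) (hd j)
    have htrow : ∀ j, (∑ i, t i j) ≤ 1 := by
      intro j
      by_cases hdj : d j = 0
      · simp [htd, hdj]
      · have hdj' : 0 < d j := lt_of_le_of_ne (hd j) (Ne.symm hdj)
        have hb := bessel u (fun _ : Fin r => (1:ℝ)) (fun i l => by rw [hu i l]) (z j)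
        have hβle : (∑ i, β i j ^ 2) ≤ d j := by
          have h1 : ∑ a, z j a ^ 2 = d j := by
            have h2 : ∑ a, z j a ^ 2 = ∑ a, z j a * z j a :=
              Finset.sum_congr rfl fun a _ => sq (z j a)
            rw [h2, hez j j, if_pos rfl]
          have h3 : ∀ i : Fin r, (∑ a, z j a * u i a) = β i j := by
            intro i
            simp only [hβd]
            exact Finset.sum_congr rfl fun a _ => by ring
          simp only [one_ne_zero, if_false, div_one] at hb
          rw [h1] at hb
          calc (∑ i, β i j ^ 2) = ∑ i, (∑ a, z j a * u i a) ^ 2 :=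
                Finset.sum_congr rfl fun i _ => by rw [h3 i]
            _ ≤ d j := hb
        have : (∑ i, t i j) = (∑ i, β i j ^ 2) / d j := by
          rw [Finset.sum_div]
          exact Finset.sum_congr rfl fun i _ => by simp only [htd, if_neg hdj]
        rw [this, div_le_one hdj']
        exact hβle
    have htcol : ∀ i, (∑ j, t i j) ≤ 1 := by
      intro i
      have hb := bessel z d hez (u i)
      have hu1 : ∑ a, u i a ^ 2 = 1 := by
        have h2 : ∑ a, u i a ^ 2 = ∑ a, u i a * u i a :=
          Finset.sum_congr rfl fun a _ => sq (u i a)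
        rw [h2, hu i i, if_pos rfl]
      rw [hu1] at hb
      calc (∑ j, t i j) = ∑ j, (if d j = 0 then (0:ℝ) else (∑ a, u i a * z j a) ^ 2 / d j) := by
            refine Finset.sum_congr rfl fun j _ => ?_
            simp only [htd, hβd]
        _ ≤ 1 := hb
    have hcross : (∑ a, ∑ b, A a b * (X * Y) a b) = ∑ j, Bys j := by
      calc ∑ a, ∑ b, A a b * (X * Y) a b
          = ∑ a, ∑ b, ∑ j, A a b * (z j a * y' j b) := by
            refine Finset.sum_congr rfl fun a _ => Finset.sum_congr rfl fun b _ => ?_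
            rw [hXYz a b, Finset.mul_sum]
        _ = ∑ a, ∑ j, ∑ b, A a b * (z j a * y' j b) :=
            Finset.sum_congr rfl fun a _ => Finset.sum_comm
        _ = ∑ j, ∑ a, ∑ b, A a b * (z j a * y' j b) := Finset.sum_comm
        _ = ∑ j, ∑ b, ∑ a, A a b * (z j a * y' j b) :=
            Finset.sum_congr rfl fun j _ => Finset.sum_comm
        _ = ∑ j, Bys j := by
            refine Finset.sum_congr rfl fun j _ => ?_
            simp only [hBysd, hBd]
            refine Finset.sum_congr rfl fun b _ => ?_
            rw [Finset.sum_mul]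
            exact Finset.sum_congr rfl fun a _ => by ring
    have hsq2 : (∑ a, ∑ b, ((X * Y) a b) ^ 2) = ∑ j, d j * Sy j := by
      calc ∑ a, ∑ b, ((X * Y) a b) ^ 2
          = ∑ a, ∑ b, ∑ j, ∑ l, (z j a * y' j b) * (z l a * y' l b) := by
            refine Finset.sum_congr rfl fun a _ => Finset.sum_congr rfl fun b _ => ?_
            rw [hXYz a b, sq, Finset.sum_mul_sum]
        _ = ∑ j, ∑ l, ∑ a, ∑ b, (z j a * y' j b) * (z l a * y' l b) :=
            sum_swap4 fun a b j l => (z j a * y' j b) * (z l a * y' l b)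
        _ = ∑ j, ∑ l, (∑ a, z j a * z l a) * (∑ b, y' j b * y' l b) := by
            refine Finset.sum_congr rfl fun j _ => Finset.sum_congr rfl fun l _ => ?_
            rw [Finset.sum_mul_sum]
            exact Finset.sum_congr rfl fun a _ => Finset.sum_congr rfl fun b _ => by ring
        _ = ∑ j, ∑ l, (if j = l then d j else 0) * (∑ b, y' j b * y' l b) := by
            refine Finset.sum_congr rfl fun j _ => Finset.sum_congr rfl fun l _ => ?_
            rw [hez j l]
        _ = ∑ j, d j * Sy j := by
            refine Finset.sum_congr rfl fun j _ => ?_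
            rw [Finset.sum_congr rfl fun l (_ : l ∈ Finset.univ) =>
              (ite_mul (j = l) (d j) 0 (∑ b, y' j b * y' l b)).trans (by rw [zero_mul])]
            rw [Finset.sum_ite_eq Finset.univ j fun l => d j * ∑ b, y' j b * y' l b,
              if_pos (Finset.mem_univ j)]
            simp only [hSyd]
            congr 1
            exact Finset.sum_congr rfl fun b _ => (sq (y' j b)).symm
    have hsub : frobSq (A - X * Y)
        = frobSq A - 2 * (∑ a, ∑ b, A a b * (X * Y) a b) + ∑ a, ∑ b, ((X * Y) a b) ^ 2 := by
      unfold frobSq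
      calc ∑ a, ∑ b, ((A - X * Y) a b) ^ 2
          = ∑ a, ∑ b, ((A a b) ^ 2 - 2 * (A a b * (X * Y) a b) + ((X * Y) a b) ^ 2) := by
            refine Finset.sum_congr rfl fun a _ => Finset.sum_congr rfl fun b _ => ?_
            rw [Matrix.sub_apply]
            ring
        _ = _ := by
            simp only [Finset.sum_add_distrib, Finset.sum_sub_distrib, ← Finset.mul_sum]
    have hobj : frobSq (A - X * Y) + γ * frobSq X + γ * frobSq Y
        = (∑ i, σ i ^ 2) + ∑ j, ((d j + γ) * Sy j - 2 * Bys j + γ * d j) := by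
      rw [hsub, hfrobA, hcross, hsq2, hfX, hfY]
      have hexp : (∑ j, ((d j + γ) * Sy j - 2 * Bys j + γ * d j))
          = (∑ j, d j * Sy j) + γ * (∑ j, Sy j) - 2 * (∑ j, Bys j) + γ * (∑ j, d j) := by
        simp only [Finset.mul_sum]
        rw [← Finset.sum_add_distrib, ← Finset.sum_sub_distrib, ← Finset.sum_add_distrib]
        exact Finset.sum_congr rfl fun j _ => by ring
      rw [hexp]
      ring
    have hbound : ∀ j, -(∑ i, t i j * (if γ < σ i then (σ i - γ) ^ 2 else 0))
        ≤ (d j + γ) * Sy j - 2 * Bys j + γ * d j := by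
      intro j
      by_cases hp : d j + γ = 0
      · have hdj : d j = 0 := by have := hd j; linarith
        have hγ0 : γ = 0 := by have := hd j; linarith
        have hBz : ∀ b, B j b = 0 := by
          intro b
          rw [hB j b]
          exact Finset.sum_eq_zero fun i _ => by rw [hβ0 i j hdj]; ring
        have hBys0 : Bys j = 0 := by
          simp only [hBysd]
          exact Finset.sum_eq_zero fun b _ => by rw [hBz b, zero_mul]
        have ht00 : ∀ i : Fin r, t i j = 0 := fun i => by simp [htd, hdj]
        rw [hBys0, hdj, hγ0]
        rw [Finset.sum_eq_zero fun i (_ : i ∈ Finset.univ) => by rw [ht00 i, zero_mul]]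
        simp
      · have hp' : 0 < d j + γ := lt_of_le_of_ne (by have := hd j; linarith) (Ne.symm hp)
        have hkey2 : 2 * (d j + γ) * Bys j ≤ (∑ b, B j b ^ 2) + (d j + γ) ^ 2 * Sy j := by
          have h0 : (0:ℝ) ≤ ∑ b, (B j b - (d j + γ) * y' j b) ^ 2 :=
            Finset.sum_nonneg fun b _ => sq_nonneg _
          have hexp : (∑ b, (B j b - (d j + γ) * y' j b) ^ 2)
              = (∑ b, B j b ^ 2) - 2 * (d j + γ) * Bys j + (d j + γ) ^ 2 * Sy j := by
            calc ∑ b, (B j b - (d j + γ) * y' j b) ^ 2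
                = ∑ b, (B j b ^ 2 - 2 * (d j + γ) * (B j b * y' j b)
                    + (d j + γ) ^ 2 * (y' j b) ^ 2) :=
                  Finset.sum_congr rfl fun b _ => by ring
              _ = _ := by
                  simp only [Finset.sum_add_distrib, Finset.sum_sub_distrib, ← Finset.mul_sum]
                  rfl
          linarith [hexp ▸ h0]
        have hstep1 : 2 * Bys j ≤ (∑ b, B j b ^ 2) / (d j + γ) + (d j + γ) * Sy j := by
          rw [show (∑ b, B j b ^ 2) / (d j + γ) + (d j + γ) * Sy j
              = ((∑ b, B j b ^ 2) + (d j + γ) ^ 2 * Sy j) / (d j + γ) by field_simp]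
          rw [le_div_iff₀ hp']
          nlinarith [hkey2]
        have hstep2 : (∑ b, B j b ^ 2) = d j * (∑ i, t i j * σ i ^ 2) := by
          rw [hBsq j, hsd j]
        have hstep3 := keyIneq γ (d j) hγ (hd j) σ (fun i => t i j) hpos
          (fun i => ht0 i j) (htrow j)
        have heq : (∑ b, B j b ^ 2) / (d j + γ) = d j * (∑ i, t i j * σ i ^ 2) / (d j + γ) := by
          rw [hstep2]
        linarith [hstep1, hstep3, heq]
    have hsum1 : -(∑ j, ∑ i, t i j * (if γ < σ i then (σ i - γ) ^ 2 else 0))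
        ≤ ∑ j, ((d j + γ) * Sy j - 2 * Bys j + γ * d j) := by
      have h1 := Finset.sum_le_sum fun j (_ : j ∈ Finset.univ) => hbound j
      have h2 : (∑ j, -(∑ i, t i j * (if γ < σ i then (σ i - γ) ^ 2 else 0)))
          = -(∑ j, ∑ i, t i j * (if γ < σ i then (σ i - γ) ^ 2 else 0)) := by
        rw [← Finset.sum_neg_distrib]
      rw [h2] at h1
      exact h1
    have hswap : (∑ j, ∑ i, t i j * (if γ < σ i then (σ i - γ) ^ 2 else 0))
        = ∑ i, (∑ j, t i j) * (if γ < σ i then (σ i - γ) ^ 2 else 0) := by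
      rw [Finset.sum_comm]
      exact Finset.sum_congr rfl fun i _ => (Finset.sum_mul _ _ _).symm
    have hcsum : (∑ i, ∑ j, t i j) ≤ (k : ℝ) := by
      calc (∑ i, ∑ j, t i j) = ∑ j, ∑ i, t i j := Finset.sum_comm
        _ ≤ ∑ _j : Fin k, (1:ℝ) := Finset.sum_le_sum fun j _ => htrow j
        _ = (k : ℝ) := by simp
    have hfun0 : ∀ i : Fin r, (0:ℝ) ≤ (if γ < σ i then (σ i - γ) ^ 2 else 0) := by
      intro i
      by_cases hik : γ < σ i
      · rw [if_pos hik]; exact sq_nonneg _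
      · rw [if_neg hik]
    have hfmono : ∀ i i' : Fin r, i ≤ i' →
        (if γ < σ i' then (σ i' - γ) ^ 2 else 0) ≤ (if γ < σ i then (σ i - γ) ^ 2 else 0) := by
      intro i i' hii
      by_cases h2 : γ < σ i'
      · have hσ2 : σ i' ≤ σ i := hmono i i' hii
        have h1 : γ < σ i := lt_of_lt_of_le h2 hσ2
        rw [if_pos h2, if_pos h1]
        have : σ i' - γ ≤ σ i - γ := by linarith
        nlinarith
      · rw [if_neg h2]
        exact hfun0 i
    have htop := topk hkr (fun i => if γ < σ i then (σ i - γ) ^ 2 else 0)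
      (fun i => ∑ j, t i j) hfun0 hfmono
      (fun i => Finset.sum_nonneg fun j _ => ht0 i j)
      htcol hcsum
    have htarget : (∑ i : Fin r, if (i : ℕ) < k then 2 * γ * σ i - γ ^ 2 else σ i ^ 2)
        = (∑ i, σ i ^ 2)
          - ∑ i : Fin r, (if (i : ℕ) < k then (if γ < σ i then (σ i - γ) ^ 2 else 0) else 0) := by
      rw [← Finset.sum_sub_distrib]
      refine Finset.sum_congr rfl fun i _ => ?_
      by_cases hik : (i : ℕ) < k
      · rw [if_pos hik, if_pos hik, if_pos (hγk i hik)]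
        ring
      · rw [if_neg hik, if_neg hik, sub_zero]
    rw [hobj, htarget]
    have hfinal : (∑ j, ∑ i, t i j * (if γ < σ i then (σ i - γ) ^ 2 else 0))
        ≤ ∑ i : Fin r, (if (i : ℕ) < k then (if γ < σ i then (σ i - γ) ^ 2 else 0) else 0) := by
      rw [hswap]
      exact htop
    linarith [hsum1, hfinal]
end
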